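/- Under the same assumptions, the generalized Ablowitz–Ladik nonlinearity 𝒢 is locally Lipschitz on ℓ²: for φ, ψ ∈ ℓ², ‖𝒢(φ) − 𝒢(ψ)‖_{ℓ²} ≤ 2[√2 q₀^{2p} + 2(2p + 1)(‖φ‖_{ℓ^∞} + ‖ψ‖_{ℓ^∞} + 2‖ζ‖_{ℓ^∞})^{2p}] ‖φ − ψ‖_{ℓ²}. -/

import Mathlib

open scoped ENNReal NNReal

noncomputable def l2norm (f : ℤ → ℂ) : ℝ := Real.sqrt (∑' n : ℤ, ‖f n‖ ^ 2)

noncomputable def linfnorm (f : ℤ → ℂ) : ℝ := ⨆ n : ℤ, ‖f n‖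

lemma summable_sq_of_memℓp {f : ℤ → ℂ} (hf : Memℓp f 2) :
    Summable fun n => ‖f n‖ ^ 2 := by
  have h := (memℓp_gen_iff (show (0:ℝ) < (2:ℝ≥0∞).toReal by norm_num)).1 hf
  have : ((2 : ℝ≥0∞).toReal) = (2 : ℝ) := by norm_num
  simpa [this, Real.rpow_two] using h

lemma memℓp_of_summable_sq {f : ℤ → ℂ} (hf : Summable fun n => ‖f n‖ ^ 2) :
    Memℓp f 2 := by
  refine (memℓp_gen_iff (show (0:ℝ) < (2:ℝ≥0∞).toReal by norm_num)).2 ?_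
  have : ((2 : ℝ≥0∞).toReal) = (2 : ℝ) := by norm_num
  simpa [this, Real.rpow_two] using hf

lemma l2norm_le_mul {a d : ℤ → ℂ} {C : ℝ} (hC : 0 ≤ C)
    (hd : Summable fun n => ‖d n‖ ^ 2) (h : ∀ n, ‖a n‖ ≤ C * ‖d n‖) :
    l2norm a ≤ C * l2norm d := by
  have hsb : ∀ n, ‖a n‖ ^ 2 ≤ C ^ 2 * ‖d n‖ ^ 2 := by
    intro n
    have h1 := h n
    nlinarith [norm_nonneg (a n), norm_nonneg (d n)]
  have hsa : Summable fun n => ‖a n‖ ^ 2 :=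
    Summable.of_nonneg_of_le (fun n => sq_nonneg _) hsb (hd.mul_left _)
  unfold l2norm
  rw [← Real.sqrt_sq hC, ← Real.sqrt_mul (sq_nonneg C)]
  refine Real.sqrt_le_sqrt ?_
  rw [← tsum_mul_left]
  exact Summable.tsum_le_tsum hsb hsa (hd.mul_left _)

lemma memℓp_of_le {a d : ℤ → ℂ} {C : ℝ} (hd : Memℓp d 2)
    (h : ∀ n, ‖a n‖ ≤ C * ‖d n‖) : Memℓp a 2 := by
  have hsb : ∀ n, ‖a n‖ ^ 2 ≤ C ^ 2 * ‖d n‖ ^ 2 := by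
    intro n
    have h1 := h n
    nlinarith [norm_nonneg (a n), norm_nonneg (d n)]
  exact memℓp_of_summable_sq
    (Summable.of_nonneg_of_le (fun n => sq_nonneg _) hsb
      ((summable_sq_of_memℓp hd).mul_left _))

lemma l2norm_eq_norm (f : ℤ → ℂ) (hf : Memℓp f 2) :
    l2norm f = ‖(⟨f, hf⟩ : lp (fun _ : ℤ => ℂ) 2)‖ := by
  rw [lp.norm_eq_tsum_rpow (show (0:ℝ) < (2:ℝ≥0∞).toReal by norm_num) ⟨f, hf⟩]
  unfold l2norm
  rw [Real.sqrt_eq_rpow]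
  norm_num [Real.rpow_two]

lemma l2norm_add_le (f g : ℤ → ℂ) (hf : Memℓp f 2) (hg : Memℓp g 2) :
    l2norm (fun n => f n + g n) ≤ l2norm f + l2norm g := by
  have hfg : Memℓp (fun n => f n + g n) 2 := hf.add hg
  rw [l2norm_eq_norm _ hf, l2norm_eq_norm _ hg, l2norm_eq_norm _ hfg]
  have : (⟨fun n => f n + g n, hfg⟩ : lp (fun _ : ℤ => ℂ) 2)
      = ⟨f, hf⟩ + ⟨g, hg⟩ := rfl
  rw [this]
  exact norm_add_le _ _

lemma l2norm_shift (d : ℤ → ℂ) (k : ℤ) :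
    l2norm (fun n => d (n + k)) = l2norm d := by
  unfold l2norm
  congr 1
  exact (Equiv.addRight k).tsum_eq fun m => ‖d m‖ ^ 2

lemma memℓp_shift {d : ℤ → ℂ} (hd : Memℓp d 2) (k : ℤ) :
    Memℓp (fun n => d (n + k)) 2 := by
  refine memℓp_of_summable_sq ?_
  exact ((Equiv.addRight k).summable_iff (f := fun m => ‖d m‖ ^ 2)).2
    (summable_sq_of_memℓp hd)

lemma rpow_mvt {a b M q : ℝ} (ha : 0 ≤ a) (hb : 0 ≤ b) (haM : a ≤ M)
    (hbM : b ≤ M) (hq : 1 ≤ q) :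
    |b ^ q - a ^ q| ≤ q * M ^ (q - 1) * |b - a| := by
  have hq0 : (0 : ℝ) ≤ q := by linarith
  have key : ∀ x ∈ Set.Icc (0 : ℝ) M,
      HasDerivWithinAt (fun x : ℝ => x ^ q) (q * x ^ (q - 1)) (Set.Icc 0 M) x :=
    fun x _ => (Real.hasDerivAt_rpow_const (Or.inr hq)).hasDerivWithinAt
  have bound : ∀ x ∈ Set.Icc (0 : ℝ) M, ‖q * x ^ (q - 1)‖ ≤ q * M ^ (q - 1) := by
    intro x hx
    rw [Real.norm_eq_abs, abs_mul, abs_of_nonneg hq0,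
      abs_of_nonneg (Real.rpow_nonneg hx.1 _)]
    exact mul_le_mul_of_nonneg_left
      (Real.rpow_le_rpow hx.1 hx.2 (by linarith)) hq0
  have := (convex_Icc (0 : ℝ) M).norm_image_sub_le_of_norm_hasDerivWithin_le
    key bound ⟨ha, haM⟩ ⟨hb, hbM⟩
  simpa [Real.norm_eq_abs] using this

lemma sq_rpow (x p : ℝ) (hx : 0 ≤ x) : (x ^ 2) ^ p = x ^ (2 * p) := by
  rw [← Real.rpow_natCast_mul hx 2 p]
  norm_num

/-- The generalized Ablowitz–Ladik nonlinearity. -/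
noncomputable def galNonlin (ζ : ℤ → ℂ) (q0 p : ℝ) (φ : ℤ → ℂ) (n : ℤ) : ℂ :=
  (((‖φ n + ζ n‖ ^ 2) ^ p : ℝ) : ℂ) *
      (φ (n + 1) + φ (n - 1) + ζ (n + 1) + ζ (n - 1))
    - 2 * (((q0 ^ 2) ^ p : ℝ) : ℂ) * (φ n + ζ n)

/-- 𝒢 is locally Lipschitz on ℓ². -/
theorem galNonlin_lipschitz (ζ : ℤ → ℂ) (q0 p : ℝ) (hq0 : 0 < q0) (hp : 1 ≤ p)
    (hζ : Memℓp ζ ⊤)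
    (φ ψ : ℤ → ℂ) (hφ : Memℓp φ 2) (hψ : Memℓp ψ 2) :
    l2norm (fun n => galNonlin ζ q0 p φ n - galNonlin ζ q0 p ψ n) ≤
      2 * (Real.sqrt 2 * (q0 ^ 2) ^ p +
            2 * (2 * p + 1) *
              (linfnorm φ + linfnorm ψ + 2 * linfnorm ζ) ^ (2 * p)) *
        l2norm (fun n => φ n - ψ n) := by
  have hbddφ : BddAbove (Set.range fun n => ‖φ n‖) :=
    memℓp_infty_iff.1 (hφ.of_exponent_ge le_top)
  have hbddψ : BddAbove (Set.range fun n => ‖ψ n‖) :=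
    memℓp_infty_iff.1 (hψ.of_exponent_ge le_top)
  have hbddζ : BddAbove (Set.range fun n => ‖ζ n‖) := memℓp_infty_iff.1 hζ
  have hφb : ∀ n, ‖φ n‖ ≤ linfnorm φ := fun n => le_ciSup hbddφ n
  have hψb : ∀ n, ‖ψ n‖ ≤ linfnorm ψ := fun n => le_ciSup hbddψ n
  have hζb : ∀ n, ‖ζ n‖ ≤ linfnorm ζ := fun n => le_ciSup hbddζ n
  have hφ0 : 0 ≤ linfnorm φ := (norm_nonneg (φ 0)).trans (hφb 0)
  have hψ0 : 0 ≤ linfnorm ψ := (norm_nonneg (ψ 0)).trans (hψb 0)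
  have hζ0 : 0 ≤ linfnorm ζ := (norm_nonneg (ζ 0)).trans (hζb 0)
  set M := linfnorm φ + linfnorm ψ + 2 * linfnorm ζ with hMdef
  have hM0 : 0 ≤ M := by simp only [hMdef]; linarith
  have hq2 : (1 : ℝ) ≤ 2 * p := by linarith
  have hMq0 : 0 ≤ M ^ (2 * p) := Real.rpow_nonneg hM0 _
  have hMq10 : 0 ≤ M ^ (2 * p - 1) := Real.rpow_nonneg hM0 _
  have hMpow : M ^ (2 * p - 1) * M = M ^ (2 * p) := by
    rcases eq_or_lt_of_le hM0 with h | h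
    · rw [← h, mul_zero, Real.zero_rpow (by positivity)]
    · rw [← Real.rpow_add_one h.ne' (2 * p - 1)]
      norm_num
  have hub : ∀ n, ‖φ n + ζ n‖ ≤ M := by
    intro n
    have := norm_add_le (φ n) (ζ n)
    have h1 := hφb n; have h2 := hζb n
    simp only [hMdef]; linarith
  have hvb : ∀ n, ‖ψ n + ζ n‖ ≤ M := by
    intro n
    have := norm_add_le (ψ n) (ζ n)
    have h1 := hψb n; have h2 := hζb n
    simp only [hMdef]; linarith
  set d : ℤ → ℂ := fun n => φ n - ψ n with hd_def
  have hd : Memℓp d 2 := hφ.sub hψ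
  have hdsum : Summable fun n => ‖d n‖ ^ 2 := summable_sq_of_memℓp hd
  set a : ℤ → ℂ := fun n =>
    (((‖φ n + ζ n‖ ^ 2) ^ p - (‖ψ n + ζ n‖ ^ 2) ^ p : ℝ) : ℂ) *
      (φ (n + 1) + φ (n - 1) + ζ (n + 1) + ζ (n - 1)) with ha_def
  set b1 : ℤ → ℂ := fun n =>
    (((‖ψ n + ζ n‖ ^ 2) ^ p : ℝ) : ℂ) * d (n + 1) with hb1_def
  set b2 : ℤ → ℂ := fun n =>
    (((‖ψ n + ζ n‖ ^ 2) ^ p : ℝ) : ℂ) * d (n - 1) with hb2_def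
  set c : ℤ → ℂ := fun n => -(2 * (((q0 ^ 2) ^ p : ℝ) : ℂ) * d n) with hc_def
  have hdecomp : (fun n => galNonlin ζ q0 p φ n - galNonlin ζ q0 p ψ n)
      = fun n => a n + b1 n + b2 n + c n := by
    funext n
    simp only [ha_def, hb1_def, hb2_def, hc_def, hd_def, galNonlin]
    push_cast
    ring
  -- pointwise bounds
  have hA : ∀ n, ‖a n‖ ≤ (4 * p * M ^ (2 * p)) * ‖d n‖ := by
    intro n
    simp only [ha_def]
    rw [norm_mul, Complex.norm_real]
    have hx0 : 0 ≤ ‖φ n + ζ n‖ := norm_nonneg _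
    have hy0 : 0 ≤ ‖ψ n + ζ n‖ := norm_nonneg _
    have h1 : |(‖φ n + ζ n‖ ^ 2) ^ p - (‖ψ n + ζ n‖ ^ 2) ^ p|
        ≤ (2 * p) * M ^ (2 * p - 1) * ‖d n‖ := by
      rw [sq_rpow _ p hx0, sq_rpow _ p hy0]
      have hm := rpow_mvt hy0 hx0 (hvb n) (hub n) hq2
      refine hm.trans ?_
      have habs : |‖φ n + ζ n‖ - ‖ψ n + ζ n‖| ≤ ‖d n‖ := by
        have h := abs_norm_sub_norm_le (φ n + ζ n) (ψ n + ζ n)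
        have e : (φ n + ζ n) - (ψ n + ζ n) = d n := by simp only [hd_def]; ring
        simpa [e] using h
      have hc0 : 0 ≤ 2 * p * M ^ (2 * p - 1) := by positivity
      exact mul_le_mul_of_nonneg_left habs hc0
    have h2 : ‖φ (n + 1) + φ (n - 1) + ζ (n + 1) + ζ (n - 1)‖ ≤ 2 * M := by
      have e1 := norm_add_le (φ (n + 1) + φ (n - 1) + ζ (n + 1)) (ζ (n - 1))
      have e2 := norm_add_le (φ (n + 1) + φ (n - 1)) (ζ (n + 1))
      have e3 := norm_add_le (φ (n + 1)) (φ (n - 1))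
      have := hφb (n + 1); have := hφb (n - 1)
      have := hζb (n + 1); have := hζb (n - 1)
      simp only [hMdef]; linarith
    calc |(‖φ n + ζ n‖ ^ 2) ^ p - (‖ψ n + ζ n‖ ^ 2) ^ p|
          * ‖φ (n + 1) + φ (n - 1) + ζ (n + 1) + ζ (n - 1)‖
        ≤ ((2 * p) * M ^ (2 * p - 1) * ‖d n‖) * (2 * M) :=
          mul_le_mul h1 h2 (norm_nonneg _) (by positivity)
      _ = (4 * p * (M ^ (2 * p - 1) * M)) * ‖d n‖ := by ring
      _ = (4 * p * M ^ (2 * p)) * ‖d n‖ := by rw [hMpow]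
  have hXv : ∀ n, |(‖ψ n + ζ n‖ ^ 2) ^ p| ≤ M ^ (2 * p) := by
    intro n
    have hy0 : 0 ≤ ‖ψ n + ζ n‖ := norm_nonneg _
    rw [abs_of_nonneg (Real.rpow_nonneg (sq_nonneg _) p), sq_rpow _ p hy0]
    exact Real.rpow_le_rpow hy0 (hvb n) (by linarith)
  have hB1 : ∀ n, ‖b1 n‖ ≤ M ^ (2 * p) * ‖d (n + 1)‖ := by
    intro n
    simp only [hb1_def]
    rw [norm_mul, Complex.norm_real]
    exact mul_le_mul_of_nonneg_right (hXv n) (norm_nonneg _)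
  have hB2 : ∀ n, ‖b2 n‖ ≤ M ^ (2 * p) * ‖d (n + (-1))‖ := by
    intro n
    simp only [hb2_def]
    rw [norm_mul, Complex.norm_real, show n - 1 = n + (-1) by ring]
    exact mul_le_mul_of_nonneg_right (hXv n) (norm_nonneg _)
  have hq0p : 0 ≤ (q0 ^ 2) ^ p := Real.rpow_nonneg (sq_nonneg _) p
  have hC : ∀ n, ‖c n‖ ≤ (2 * (q0 ^ 2) ^ p) * ‖d n‖ := by
    intro n
    simp only [hc_def]
    rw [norm_neg, norm_mul, norm_mul, Complex.norm_real, Complex.norm_ofNat,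
      Real.norm_of_nonneg hq0p]
  -- membership
  have hma : Memℓp a 2 := memℓp_of_le hd hA
  have hmd1 : Memℓp (fun n => d (n + 1)) 2 := memℓp_shift hd 1
  have hmd2 : Memℓp (fun n => d (n + (-1))) 2 := memℓp_shift hd (-1)
  have hmb1 : Memℓp b1 2 := memℓp_of_le hmd1 hB1
  have hmb2 : Memℓp b2 2 := memℓp_of_le hmd2 hB2
  have hmc : Memℓp c 2 := memℓp_of_le hd hC
  -- norm bounds
  have hp0 : 0 < p := lt_of_lt_of_le one_pos hp
  have hNa : l2norm a ≤ (4 * p * M ^ (2 * p)) * l2norm d :=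
    l2norm_le_mul (by positivity) hdsum hA
  have hNb1 : l2norm b1 ≤ M ^ (2 * p) * l2norm d := by
    have := l2norm_le_mul (a := b1) (d := fun n => d (n + 1)) hMq0
      (summable_sq_of_memℓp hmd1) hB1
    rwa [l2norm_shift d 1] at this
  have hNb2 : l2norm b2 ≤ M ^ (2 * p) * l2norm d := by
    have := l2norm_le_mul (a := b2) (d := fun n => d (n + (-1))) hMq0
      (summable_sq_of_memℓp hmd2) hB2
    rwa [l2norm_shift d (-1)] at this
  have hNc : l2norm c ≤ (2 * (q0 ^ 2) ^ p) * l2norm d :=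
    l2norm_le_mul (by positivity) hdsum hC
  -- triangle inequality
  have htri : l2norm (fun n => galNonlin ζ q0 p φ n - galNonlin ζ q0 p ψ n)
      ≤ l2norm a + l2norm b1 + l2norm b2 + l2norm c := by
    rw [hdecomp]
    calc l2norm (fun n => a n + b1 n + b2 n + c n)
        ≤ l2norm (fun n => a n + b1 n + b2 n) + l2norm c :=
          l2norm_add_le _ _ ((hma.add hmb1).add hmb2) hmc
      _ ≤ (l2norm (fun n => a n + b1 n) + l2norm b2) + l2norm c := by
          have := l2norm_add_le (fun n => a n + b1 n) b2 (hma.add hmb1) hmb2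
          linarith
      _ ≤ ((l2norm a + l2norm b1) + l2norm b2) + l2norm c := by
          have := l2norm_add_le a b1 hma hmb1
          linarith
      _ = l2norm a + l2norm b1 + l2norm b2 + l2norm c := by ring
  have hD0 : 0 ≤ l2norm d := Real.sqrt_nonneg _
  have hsqrt2 : (1 : ℝ) ≤ Real.sqrt 2 := by
    rw [show (1 : ℝ) = Real.sqrt 1 by simp]
    exact Real.sqrt_le_sqrt (by norm_num)
  have hfinal : l2norm a + l2norm b1 + l2norm b2 + l2norm c
      ≤ 2 * (Real.sqrt 2 * (q0 ^ 2) ^ p + 2 * (2 * p + 1) * M ^ (2 * p)) * l2norm d := by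
    nlinarith [mul_nonneg hMq0 hD0, mul_nonneg hq0p hD0,
      mul_nonneg (mul_nonneg hMq0 hD0) hp0.le,
      mul_le_mul_of_nonneg_left hsqrt2 (mul_nonneg hq0p hD0)]
  calc l2norm (fun n => galNonlin ζ q0 p φ n - galNonlin ζ q0 p ψ n)
      ≤ l2norm a + l2norm b1 + l2norm b2 + l2norm c := htri
    _ ≤ _ := hfinal
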